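/- Let (X̂_i) be a random walk on ℤ with i.i.d. steps uniform on {-1,0,1}, started at X̂_0 = 1, and let M_j = (f(X̂_j)/f(X̂_0)) · ∏_{i=0}^{j-1} w(X̂_i), where f(x) = x(x+3)(2x+3) and w(x) = x(x+3)/((x+1)(x+2)). Then (M_j)_{j≥0} is a martingale with respect to the natural filtration of X̂. -/

import Mathlib

open MeasureTheory Finset

noncomputable def f (x : ℝ) : ℝ := x * (x + 3) * (2 * x + 3)

noncomputable def w (x : ℝ) : ℝ := x * (x + 3) / ((x + 1) * (x + 2))

lemma f_one : f 1 = 20 := by norm_num [f]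

lemma w_zero : w 0 = 0 := by norm_num [w]

lemma avg_f (x : ℝ) : (f (x - 1) + f x + f (x + 1)) / 3 = (x + 1) * (x + 2) * (2 * x + 3) := by
  simp only [f]; ring

lemma w_mul (x : ℝ) (h : (x + 1) * (x + 2) ≠ 0) :
    w x * ((x + 1) * (x + 2) * (2 * x + 3)) = f x := by
  simp only [w, f]
  rw [div_mul_eq_mul_div, div_eq_iff h]
  ring

lemma abs_f_le (x : ℝ) {c : ℝ} (h : |x| ≤ c) : |f x| ≤ (c + 3) ^ 2 * (2 * c + 3) := by
  have hc0 : 0 ≤ c := le_trans (abs_nonneg _) h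
  have h1 : |x + 3| ≤ c + 3 := (abs_add_le _ _).trans (by norm_num; linarith)
  have h2 : |2 * x + 3| ≤ 2 * c + 3 := by
    refine (abs_add_le _ _).trans ?_
    rw [abs_mul]
    norm_num
    linarith
  have p1 : |x| * |x + 3| ≤ c * (c + 3) := mul_le_mul h h1 (abs_nonneg _) hc0
  have p2 : |x| * |x + 3| * |2 * x + 3| ≤ c * (c + 3) * (2 * c + 3) :=
    mul_le_mul p1 h2 (abs_nonneg _) (by positivity)
  simp only [f, abs_mul]
  nlinarith

lemma abs_w_le (n : ℤ) {c : ℝ} (h : |(n : ℝ)| ≤ c) : |w (n : ℝ)| ≤ (c + 3) ^ 2 := by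
  have hc0 : 0 ≤ c := le_trans (abs_nonneg _) h
  by_cases hd : ((n : ℝ) + 1) * ((n : ℝ) + 2) = 0
  · rw [w, hd, div_zero, abs_zero]
    positivity
  · have hnum : |(n : ℝ) * ((n : ℝ) + 3)| ≤ (c + 3) ^ 2 := by
      have h1 : |(n : ℝ) + 3| ≤ c + 3 := (abs_add_le _ _).trans (by norm_num; linarith)
      rw [abs_mul]
      nlinarith [abs_nonneg ((n : ℝ)), abs_nonneg ((n : ℝ) + 3)]
    have hcast : ((n : ℝ) + 1) * ((n : ℝ) + 2) = (((n + 1) * (n + 2) : ℤ) : ℝ) := by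
      push_cast; ring
    have hdz : ((n + 1) * (n + 2) : ℤ) ≠ 0 := by
      intro hz
      apply hd
      rw [hcast, hz, Int.cast_zero]
    have h1 : (1 : ℝ) ≤ |((n : ℝ) + 1) * ((n : ℝ) + 2)| := by
      rw [hcast, ← Int.cast_abs]
      exact_mod_cast Int.one_le_abs hdz
    rw [w, abs_div]
    calc |(n : ℝ) * ((n : ℝ) + 3)| / |((n : ℝ) + 1) * ((n : ℝ) + 2)|
        ≤ |(n : ℝ) * ((n : ℝ) + 3)| / 1 := by
          apply div_le_div_of_nonneg_left (abs_nonneg _) one_pos h1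
      _ = |(n : ℝ) * ((n : ℝ) + 3)| := by rw [div_one]
      _ ≤ (c + 3) ^ 2 := hnum

/-- If `X̂` is a random walk with i.i.d. steps uniform on `{-1,0,1}` started at `1`,
then `M_j = (f(X̂_j)/f(X̂_0)) · ∏_{i<j} w(X̂_i)` is a martingale for the natural
filtration of `X̂`. -/
theorem stmt_2 {Ω : Type*} {m0 : MeasurableSpace Ω} (μ : Measure Ω)
    [IsProbabilityMeasure μ] (ℱ : Filtration ℕ m0)
    (X : ℕ → Ω → ℤ)
    (hadapted : ∀ j, Measurable[ℱ j] (X j))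
    (hstart : ∀ ω, X 0 ω = 1)
    (hstep : ∀ j ω, |X (j + 1) ω - X j ω| ≤ 1)
    (hcond : ∀ j, ∀ g : ℤ → ℝ,
      μ[(fun ω => g (X (j + 1) ω)) | ℱ j]
        =ᵐ[μ] fun ω => (g (X j ω - 1) + g (X j ω) + g (X j ω + 1)) / 3)
    (M : ℕ → Ω → ℝ)
    (hM : ∀ j ω, M j ω =
      f ((X j ω : ℝ)) / f ((X 0 ω : ℝ)) * ∏ i ∈ Finset.range j, w ((X i ω : ℝ))) :
    Martingale M ℱ μ := by
  -- bound on the walk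
  have hXb : ∀ j ω, |X j ω| ≤ (j : ℤ) + 1 := by
    intro j
    induction j with
    | zero => intro ω; rw [hstart]; norm_num
    | succ n ih =>
      intro ω
      have h1 := hstep n ω
      have h2 := ih ω
      have h3 : |X (n + 1) ω| - |X n ω| ≤ |X (n + 1) ω - X n ω| :=
        abs_sub_abs_le_abs_sub _ _
      push_cast
      push_cast at h2
      linarith
  -- hitting zero before going negative
  have hzero : ∀ ω j, X j ω < 0 → ∃ i, i < j ∧ X i ω = 0 := by
    intro ω j
    induction j with
    | zero => intro h; rw [hstart] at h; omega
    | succ n ih =>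
      intro h
      by_cases hn : X n ω < 0
      · obtain ⟨i, hi, h0⟩ := ih hn
        exact ⟨i, hi.trans (Nat.lt_succ_self n), h0⟩
      · push_neg at hn
        have h1 := hstep n ω
        rw [abs_le] at h1
        exact ⟨n, Nat.lt_succ_self n, by omega⟩
  -- measurability helpers
  have hXm : ∀ j i, i ≤ j → Measurable[ℱ j] fun ω => ((X i ω : ℝ)) := by
    intro j i hij
    exact (measurable_from_top (f := fun n : ℤ => (n : ℝ))).comp
      ((hadapted i).mono (ℱ.mono hij) le_rfl)
  have hMm : ∀ j, StronglyMeasurable[ℱ j] (M j) := by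
    intro j
    have hrw : M j = fun ω =>
        f ((X j ω : ℝ)) / f ((X 0 ω : ℝ)) * ∏ i ∈ Finset.range j, w ((X i ω : ℝ)) :=
      funext (hM j)
    rw [hrw]
    apply Measurable.stronglyMeasurable
    apply Measurable.mul
    · apply Measurable.div
      · exact (measurable_from_top (f := fun n : ℤ => f (n : ℝ))).comp
          ((hadapted j).mono le_rfl le_rfl)
      · exact (measurable_from_top (f := fun n : ℤ => f (n : ℝ))).comp
          ((hadapted 0).mono (ℱ.mono (Nat.zero_le j)) le_rfl)
    · apply Finset.measurable_prod
      intro i hi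
      exact (measurable_from_top (f := fun n : ℤ => w (n : ℝ))).comp
        ((hadapted i).mono (ℱ.mono (le_of_lt (mem_range.mp hi))) le_rfl)
  -- integrability
  have hMint : ∀ j, Integrable (M j) μ := by
    intro j
    refine ⟨((hMm j).mono (ℱ.le j)).aestronglyMeasurable,
      HasFiniteIntegral.of_bounded (C := (((j : ℝ) + 1 + 3) ^ 2 * (2 * ((j : ℝ) + 1) + 3)) / 20 *
        ∏ i ∈ Finset.range j, (((i : ℝ) + 1) + 3) ^ 2) (ae_of_all _ ?_)⟩
    intro ω
    rw [Real.norm_eq_abs, hM j ω, hstart ω]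
    have hcast : |((X j ω : ℤ) : ℝ)| ≤ (j : ℝ) + 1 := by
      rw [← Int.cast_abs]
      exact_mod_cast hXb j ω
    have hfb : |f ((X j ω : ℤ) : ℝ)| ≤ ((j : ℝ) + 1 + 3) ^ 2 * (2 * ((j : ℝ) + 1) + 3) :=
      abs_f_le _ hcast
    have hpb : |∏ i ∈ Finset.range j, w ((X i ω : ℝ))| ≤
        ∏ i ∈ Finset.range j, (((i : ℝ) + 1) + 3) ^ 2 := by
      rw [Finset.abs_prod]
      apply Finset.prod_le_prod (fun i _ => abs_nonneg _)
      intro i _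
      apply abs_w_le
      rw [← Int.cast_abs]
      exact_mod_cast hXb i ω
    have h20 : f ((1 : ℤ) : ℝ) = 20 := by rw [Int.cast_one, f_one]
    rw [abs_mul, abs_div, h20]
    have h20' : |(20 : ℝ)| = 20 := by norm_num
    rw [h20']
    apply mul_le_mul
    · apply div_le_div_of_nonneg_right hfb (by norm_num)
    · exact hpb
    · exact abs_nonneg _
    · positivity
  -- conclusion via martingale_nat
  apply martingale_nat (fun j => hMm j) hMint
  intro j
  set gg : ℤ → ℝ := fun n => f (n : ℝ) / 20 with hgg
  set c : Ω → ℝ := fun ω => ∏ i ∈ Finset.range (j + 1), w ((X i ω : ℝ)) with hc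
  set G : Ω → ℝ := fun ω => gg (X (j + 1) ω) with hG
  have hMeq : M (j + 1) = c * G := by
    funext ω
    rw [Pi.mul_apply, hM (j + 1) ω, hstart ω]
    simp only [hc, hG, hgg, Int.cast_one, f_one]
    ring
  have hcm : StronglyMeasurable[ℱ j] c := by
    apply Measurable.stronglyMeasurable
    apply Finset.measurable_prod
    intro i hi
    have hij : i ≤ j := Nat.lt_succ_iff.mp (mem_range.mp hi)
    exact (measurable_from_top (f := fun n : ℤ => w (n : ℝ))).comp
      ((hadapted i).mono (ℱ.mono hij) le_rfl)
  have hGint : Integrable G μ := by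
    refine ⟨(((measurable_from_top (f := gg)).comp
      ((hadapted (j + 1)).mono (ℱ.le (j + 1)) le_rfl)).stronglyMeasurable).aestronglyMeasurable,
      HasFiniteIntegral.of_bounded
        (C := (((j : ℝ) + 2 + 3) ^ 2 * (2 * ((j : ℝ) + 2) + 3)) / 20) (ae_of_all _ ?_)⟩
    intro ω
    rw [Real.norm_eq_abs]
    simp only [hG, hgg]
    rw [abs_div]
    have hcast : |((X (j + 1) ω : ℤ) : ℝ)| ≤ (j : ℝ) + 2 := by
      rw [← Int.cast_abs]
      have := hXb (j + 1) ω
      push_cast at this ⊢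
      exact_mod_cast by push_cast; linarith [hXb (j + 1) ω]
    have := abs_f_le _ hcast
    have h20' : |(20 : ℝ)| = 20 := by norm_num
    rw [h20']
    apply div_le_div_of_nonneg_right this (by norm_num)
  have h1 : μ[M (j + 1)|ℱ j] =ᵐ[μ] c * μ[G|ℱ j] := by
    rw [hMeq]
    exact condExp_mul_of_stronglyMeasurable_left hcm (hMeq ▸ hMint (j + 1)) hGint
  have h3 : ∀ ω, c ω * ((gg (X j ω - 1) + gg (X j ω) + gg (X j ω + 1)) / 3) = M j ω := by
    intro ω
    rw [hM j ω, hstart ω]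
    have h20 : f (((1 : ℤ)) : ℝ) = 20 := by rw [Int.cast_one, f_one]
    rw [h20]
    have hsplit : c ω = (∏ i ∈ Finset.range j, w ((X i ω : ℝ))) * w ((X j ω : ℝ)) := by
      simp only [hc]
      rw [Finset.prod_range_succ]
    set x : ℝ := (X j ω : ℝ) with hx
    have e1 : ((X j ω - 1 : ℤ) : ℝ) = x - 1 := by push_cast; ring
    have e3 : ((X j ω + 1 : ℤ) : ℝ) = x + 1 := by push_cast; ring
    simp only [hgg, e1, e3]
    by_cases hd : (x + 1) * (x + 2) = 0
    · have hneg : X j ω < 0 := by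
        rcases mul_eq_zero.mp hd with h | h
        · have : (X j ω : ℝ) = -1 := by linarith [hx ▸ h]
          have : X j ω = -1 := by exact_mod_cast this
          omega
        · have : (X j ω : ℝ) = -2 := by linarith [hx ▸ h]
          have : X j ω = -2 := by exact_mod_cast this
          omega
      obtain ⟨i, hi, h0⟩ := hzero ω j hneg
      have hP : (∏ i ∈ Finset.range j, w ((X i ω : ℝ))) = 0 := by
        apply Finset.prod_eq_zero (Finset.mem_range.mpr hi)
        rw [h0, Int.cast_zero, w_zero]
      rw [hsplit, hP]
      ring
    · have key : w x * ((f (x - 1) + f x + f (x + 1)) / 3) = f x := by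
        rw [avg_f]; exact w_mul x hd
      rw [hsplit]
      linear_combination ((∏ i ∈ Finset.range j, w ((X i ω : ℝ))) / 20) * key
  filter_upwards [h1, hcond j gg] with ω hω1 hω2
  rw [hω1, Pi.mul_apply, hω2]
  exact (h3 ω).symm
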